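/- arXiv:1708.03853 — 6 statements merged into one kernel-verified Lean document; each statement's English description precedes it below -/
import Mathlib

section
/- Let G be the join of two graphs G₁ and G₂ and let p : S → C be a partial coloring of G such that S ∩ V(G₁) is nonempty, p takes the single value j on all of S ∩ V(G₁), and p takes at least two distinct values on S ∩ V(G₂). Let c* be the extension of p that assigns color j to every uncolored vertex. Then for every total coloring c extending p, the number of vertices happy with respect to c is at most the number of vertices happy with respect to c*. -/
/-- A vertex is happy w.r.t. a total coloring if all its neighbors share its color. -/
def IsHappyVertex {V Col : Type*} (G : SimpleGraph V) (c : V → Col) (v : V) : Prop :=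
  ∀ u, G.Adj v u → c u = c v

/-- The number of happy vertices w.r.t. a total coloring. -/
noncomputable def happyVertexCount {V Col : Type*} (G : SimpleGraph V) (c : V → Col) : ℕ :=
  {v | IsHappyVertex G c v}.ncard

/-- The join of two graphs: both graphs together with all edges between them. -/
def GraphJoin {V₁ V₂ : Type*} (G₁ : SimpleGraph V₁) (G₂ : SimpleGraph V₂) :
    SimpleGraph (V₁ ⊕ V₂) where
  Adj x y :=
    match x, y with
    | Sum.inl a, Sum.inl b => G₁.Adj a b
    | Sum.inr a, Sum.inr b => G₂.Adj a b
    | Sum.inl _, Sum.inr _ => True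
    | Sum.inr _, Sum.inl _ => True
  symm := by
    constructor
    rintro (a | a) (b | b) h <;> simp_all
    · exact h.symm
    · exact h.symm
  loopless := by
    constructor
    rintro (a | a) h
    · exact G₁.irrefl h
    · exact G₂.irrefl h

/-- Suppose the precoloring of the join of `G₁` and `G₂` takes the single value `j` on the
(nonempty) set of precolored vertices of `G₁` and at least two distinct values on the precolored
vertices of `G₂`.  Then the extension `cstar` of `p` coloring every uncolored vertex with `j`
has at least as many happy vertices as any extension `c` of `p`. -/
theorem join_one_color_side_optimal_extension
    {V₁ V₂ Col : Type*} [Fintype V₁] [Fintype V₂]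
    (G₁ : SimpleGraph V₁) (G₂ : SimpleGraph V₂)
    (S : Set (V₁ ⊕ V₂)) (p : S → Col) (j : Col)
    (hne : ∃ a : V₁, Sum.inl a ∈ S)
    (hconst : ∀ (a : V₁) (ha : Sum.inl a ∈ S), p ⟨Sum.inl a, ha⟩ = j)
    (htwo : ∃ (a b : V₂) (ha : Sum.inr a ∈ S) (hb : Sum.inr b ∈ S),
      p ⟨Sum.inr a, ha⟩ ≠ p ⟨Sum.inr b, hb⟩)
    (cstar : V₁ ⊕ V₂ → Col)
    (hcstar₁ : ∀ x (hx : x ∈ S), cstar x = p ⟨x, hx⟩)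
    (hcstar₂ : ∀ x, x ∉ S → cstar x = j)
    (c : V₁ ⊕ V₂ → Col) (hc : ∀ x (hx : x ∈ S), c x = p ⟨x, hx⟩) :
    happyVertexCount (GraphJoin G₁ G₂) c ≤ happyVertexCount (GraphJoin G₁ G₂) cstar := by
  obtain ⟨a₀, ha₀⟩ := hne
  apply Set.ncard_le_ncard _ (Set.toFinite _)
  intro v hv
  obtain ⟨x, y, hx, hy, hxy⟩ := htwo
  cases v with
  | inl a =>
    exfalso
    have h1 := hv (Sum.inr x) trivial
    have h2 := hv (Sum.inr y) trivial
    rw [hc _ hx] at h1; rw [hc _ hy] at h2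
    exact hxy (h1.trans h2.symm)
  | inr w =>
    have hcw : c (Sum.inr w) = j := by
      have h := hv (Sum.inl a₀) trivial
      rw [hc _ ha₀, hconst] at h
      exact h.symm
    have hcsw : cstar (Sum.inr w) = j := by
      by_cases h : Sum.inr w ∈ S
      · rw [hcstar₁ _ h, ← hc _ h, hcw]
      · exact hcstar₂ _ h
    intro u hu
    cases u with
    | inl b =>
      rw [hcsw]
      by_cases h : Sum.inl b ∈ S
      · rw [hcstar₁ _ h, hconst]
      · exact hcstar₂ _ h
    | inr u =>
      have hcu : c (Sum.inr u) = j := by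
        have h := hv (Sum.inr u) hu
        rw [hcw] at h; exact h
      rw [hcsw]
      by_cases h : Sum.inr u ∈ S
      · rw [hcstar₁ _ h, ← hc _ h, hcu]
      · exact hcstar₂ _ h
end

section
/- Let G be a finite simple graph with m edges, and let H be the vertex–edge incidence graph of G: the vertex set of H is V(G) ⊔ E(G), and a_u ∈ V(G) is adjacent in H to b_e ∈ E(G) if and only if u is an endpoint of e (there are no other edges in H). Then for every total coloring c' of H, the number of happy edges of H with respect to c' is at most m plus the number of happy edges of G with respect to the restriction of c' to V(G). -/
/-- The number of happy edges (edges whose endpoints share a color) w.r.t. a total coloring. -/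
noncomputable def happyEdgeCount {V Col : Type*} (G : SimpleGraph V) (c : V → Col) : ℕ :=
  {e ∈ G.edgeSet | (Sym2.map c e).IsDiag}.ncard

/-- The vertex–edge incidence graph of a graph: a vertex `u` of `G` is adjacent to an
edge-vertex `e` of `G` exactly when `u` is an endpoint of `e`. -/
def IncidenceGraph {V : Type*} (G : SimpleGraph V) : SimpleGraph (V ⊕ G.edgeSet) where
  Adj x y :=
    match x, y with
    | Sum.inl u, Sum.inr e => u ∈ (e : Sym2 V)
    | Sum.inr e, Sum.inl u => u ∈ (e : Sym2 V)
    | _, _ => False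
  symm := by
    constructor
    rintro (u | e) (u' | e') h <;> simp_all
  loopless := by
    constructor
    rintro (u | e) h <;> simp_all

lemma incidence_edge_repr {V : Type*} (G : SimpleGraph V) {x : Sym2 (V ⊕ G.edgeSet)}
    (hx : x ∈ (IncidenceGraph G).edgeSet) :
    ∃ (u : V) (e : G.edgeSet), u ∈ (e : Sym2 V) ∧ x = s(Sum.inl u, Sum.inr e) := by
  induction x using Sym2.ind with
  | _ a b =>
    rw [SimpleGraph.mem_edgeSet] at hx
    rcases a with u | e <;> rcases b with u' | e'
    · exact absurd hx (by simp [IncidenceGraph])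
    · exact ⟨u, e', hx, rfl⟩
    · exact ⟨u', e, hx, Sym2.eq_swap⟩
    · exact absurd hx (by simp [IncidenceGraph])

/-- For any total coloring `c'` of the incidence graph `H` of `G`, the number of happy edges of
`H` is at most `m` plus the number of happy edges of `G` w.r.t. the restriction of `c'` to
the vertices of `G`. -/
theorem incidenceGraph_happyEdges_le
    {V Col : Type*} [Fintype V] [DecidableEq V] (G : SimpleGraph V) [DecidableRel G.Adj]
    (c' : (V ⊕ G.edgeSet) → Col) :
    happyEdgeCount (IncidenceGraph G) c' ≤
      G.edgeSet.ncard + happyEdgeCount G (fun v => c' (Sum.inl v)) := by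
  classical
  set S : Set (Sym2 (V ⊕ G.edgeSet)) :=
    {e ∈ (IncidenceGraph G).edgeSet | (Sym2.map c' e).IsDiag} with hS
  set T : Set (Sym2 V) :=
    {e ∈ G.edgeSet | (Sym2.map (fun v => c' (Sum.inl v)) e).IsDiag} with hT
  have hrep : ∀ x : S, ∃ (u : V) (e : G.edgeSet),
      u ∈ (e : Sym2 V) ∧ (x : Sym2 (V ⊕ G.edgeSet)) = s(Sum.inl u, Sum.inr e) :=
    fun x => incidence_edge_repr G x.2.1
  choose u e hmem hx using hrep
  -- happiness of each incidence
  have hhappy : ∀ x : S, c' (Sum.inl (u x)) = c' (Sum.inr (e x)) := by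
    intro x
    have := x.2.2
    rw [hx x] at this
    simpa using this
  -- the other endpoint
  set w : S → V := fun x => Sym2.Mem.other' (hmem x) with hw
  have hspec : ∀ x : S, s(u x, w x) = (e x : Sym2 V) := fun x => Sym2.other_spec' (hmem x)
  have hwne : ∀ x : S, w x ≠ u x := by
    intro x
    show Sym2.Mem.other' (hmem x) ≠ u x
    rw [← Sym2.other_eq_other' (hmem x)]
    exact Sym2.other_ne (G.not_isDiag_of_mem_edgeSet (e x).2) (hmem x)
  have hTmem : ∀ x : S, c' (Sum.inl (w x)) = c' (Sum.inr (e x)) → (e x : Sym2 V) ∈ T := by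
    intro x h
    refine ⟨(e x).2, ?_⟩
    rw [← hspec x]
    simp only [Sym2.map_pair_eq, Sym2.mk_isDiag_iff]
    rw [hhappy x, h]
  -- the injection
  set F : S → G.edgeSet ⊕ T := fun x =>
    if h : c' (Sum.inl (w x)) = c' (Sum.inr (e x)) ∧ u x = (Quot.out (e x : Sym2 V)).2 then
      Sum.inr ⟨(e x : Sym2 V), hTmem x h.1⟩
    else Sum.inl (e x) with hF
  have hinj : Function.Injective F := by
    intro x y hxy
    have hout : ∀ z : S, u z = (Quot.out (e z : Sym2 V)).1 ∨ u z = (Quot.out (e z : Sym2 V)).2 := by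
      intro z
      have := hmem z
      rw [← Quot.out_eq (e z : Sym2 V)] at this
      exact Sym2.mem_iff.mp this
    rw [hF] at hxy
    simp only at hxy
    by_cases h1 : c' (Sum.inl (w x)) = c' (Sum.inr (e x)) ∧ u x = (Quot.out (e x : Sym2 V)).2 <;>
      by_cases h2 : c' (Sum.inl (w y)) = c' (Sum.inr (e y)) ∧ u y = (Quot.out (e y : Sym2 V)).2
    · -- both inr
      rw [dif_pos h1, dif_pos h2] at hxy
      have he : (e x : Sym2 V) = (e y : Sym2 V) := by
        have := Sum.inr.inj hxy
        exact congrArg (fun z : T => (z : Sym2 V)) this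
      have he' : e x = e y := Subtype.ext he
      have hu : u x = u y := by rw [h1.2, h2.2, he]
      apply Subtype.ext
      rw [hx x, hx y, hu, he']
    · rw [dif_pos h1, dif_neg h2] at hxy
      exact absurd hxy (by simp)
    · rw [dif_neg h1, dif_pos h2] at hxy
      exact absurd hxy (by simp)
    · -- both inl
      rw [dif_neg h1, dif_neg h2] at hxy
      have he' : e x = e y := Sum.inl.inj hxy
      have he : (e x : Sym2 V) = (e y : Sym2 V) := by rw [he']
      by_cases huv : u x = u y
      · exact Subtype.ext (by rw [hx x, hx y, huv, he'])
      · exfalso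
        -- u y ∈ e x = s(u x, w x), u y ≠ u x so u y = w x; similarly u x = w y
        have hy1 : u y = w x := by
          have : u y ∈ (e x : Sym2 V) := he ▸ hmem y
          rw [← hspec x, Sym2.mem_iff] at this
          tauto
        have hy2 : u x = w y := by
          have : u x ∈ (e y : Sym2 V) := he ▸ hmem x
          rw [← hspec y, Sym2.mem_iff] at this
          rcases this with h | h
          · exact absurd h.symm (fun hh => huv hh.symm)
          · exact h
        have c1 : c' (Sum.inl (w x)) = c' (Sum.inr (e x)) := by
          rw [← hy1, hhappy y, he']
        have c2 : c' (Sum.inl (w y)) = c' (Sum.inr (e y)) := by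
          rw [← hy2, hhappy x, he']
        have n1 : u x ≠ (Quot.out (e x : Sym2 V)).2 := fun h => h1 ⟨c1, h⟩
        have n2 : u y ≠ (Quot.out (e y : Sym2 V)).2 := fun h => h2 ⟨c2, h⟩
        have o1 : u x = (Quot.out (e x : Sym2 V)).1 := (hout x).resolve_right n1
        have o2 : u y = (Quot.out (e y : Sym2 V)).1 := (hout y).resolve_right n2
        exact huv (by rw [o1, o2, he])
  -- cardinalities
  have hSfin : S.Finite := Set.Finite.subset (Set.finite_univ) (Set.subset_univ _)
  have hTfin : T.Finite := Set.Finite.subset (Set.finite_univ) (Set.subset_univ _)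
  have : Nat.card S ≤ Nat.card (G.edgeSet ⊕ T) := by
    haveI : Finite T := hTfin
    haveI : Finite G.edgeSet := Set.toFinite _
    exact Nat.card_le_card_of_injective F hinj
  rw [Nat.card_sum] at this
  calc happyEdgeCount (IncidenceGraph G) c' = Nat.card S := (Nat.card_coe_set_eq S).symm
    _ ≤ Nat.card G.edgeSet + Nat.card T := this
    _ = G.edgeSet.ncard + happyEdgeCount G (fun v => c' (Sum.inl v)) := by
        rw [Nat.card_coe_set_eq, Nat.card_coe_set_eq]; rfl
end

section
/- Let G be a finite simple graph with m edges, and let H be the vertex–edge incidence graph of G. For every total coloring c of G there exists a total coloring c' of H that agrees with c on V(G) such that the number of happy edges of H with respect to c' is at least m plus the number of happy edges of G with respect to c. (Such a c' is obtained by coloring each edge-vertex b_e, for e = {u,v}, with the color c(u) of one of its endpoints.) -/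
/-- For every total coloring `c` of `G` there is a total coloring `c'` of the incidence graph of
`G` agreeing with `c` on the vertices of `G` whose number of happy edges is at least `m` plus
the number of happy edges of `G` w.r.t. `c`. -/
theorem incidenceGraph_happyEdges_ge
    {V Col : Type*} [Fintype V] [DecidableEq V] (G : SimpleGraph V) [DecidableRel G.Adj]
    (c : V → Col) :
    ∃ c' : (V ⊕ G.edgeSet) → Col, (∀ v, c' (Sum.inl v) = c v) ∧
      G.edgeSet.ncard + happyEdgeCount G c ≤ happyEdgeCount (IncidenceGraph G) c' := by
  classical
  have hF : Finite G.edgeSet := Set.Finite.to_subtype (Set.toFinite _)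
  set c' : (V ⊕ G.edgeSet) → Col := fun x =>
    match x with
    | Sum.inl v => c v
    | Sum.inr e => c (e : Sym2 V).out.1 with hc'
  refine ⟨c', fun v => rfl, ?_⟩
  set T : Set (Sym2 (V ⊕ G.edgeSet)) :=
    {e ∈ (IncidenceGraph G).edgeSet | (Sym2.map c' e).IsDiag} with hT
  have hTfin : T.Finite := Set.toFinite _
  -- incidence edge membership lemma
  have hmem : ∀ (u : V) (e : G.edgeSet), u ∈ (e : Sym2 V) →
      s(Sum.inl u, Sum.inr e) ∈ (IncidenceGraph G).edgeSet := by
    intro u e hu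
    exact hu
  have key : ∀ (u : V) (e : G.edgeSet), u ∈ (e : Sym2 V) → c u = c (e : Sym2 V).out.1 →
      s(Sum.inl u, Sum.inr e) ∈ T := by
    intro u e hu hcu
    refine ⟨hmem u e hu, ?_⟩
    simp [Sym2.isDiag_iff_proj_eq, c', hcu]
  set f : G.edgeSet → Sym2 (V ⊕ G.edgeSet) := fun e => s(Sum.inl (e : Sym2 V).out.1, Sum.inr e)
  set g : G.edgeSet → Sym2 (V ⊕ G.edgeSet) := fun e => s(Sum.inl (e : Sym2 V).out.2, Sum.inr e)
  set A : Set G.edgeSet := Set.univ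
  set B : Set G.edgeSet := {e | (Sym2.map c (e : Sym2 V)).IsDiag}
  have houteq : ∀ e : G.edgeSet, (e : Sym2 V) = s((e : Sym2 V).out.1, (e : Sym2 V).out.2) := by
    intro e
    rw [Sym2.mk, Quot.out_eq]
  have hfT : ∀ e ∈ A, f e ∈ T := fun e _ =>
    key _ e (Sym2.out_fst_mem _) rfl
  have hgT : ∀ e ∈ B, g e ∈ T := by
    intro e he
    refine key _ e (Sym2.out_snd_mem _) ?_
    have := he
    simp only [B, Set.mem_setOf_eq] at this
    rw [houteq e] at this
    simp only [Sym2.map_pair_eq, Sym2.isDiag_iff_proj_eq] at this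
    exact this.symm
  have hfinj : Set.InjOn f A := by
    intro a _ b _ h
    simp only [f, Sym2.eq_iff] at h
    rcases h with ⟨_, h2⟩ | ⟨h1, _⟩
    · exact Sum.inr_injective h2
    · exact (Sum.inl_ne_inr h1).elim
  have hginj : Set.InjOn g B := by
    intro a _ b _ h
    simp only [g, Sym2.eq_iff] at h
    rcases h with ⟨_, h2⟩ | ⟨h1, _⟩
    · exact Sum.inr_injective h2
    · exact (Sum.inl_ne_inr h1).elim
  have hdisj : Disjoint (f '' A) (g '' B) := by
    rw [Set.disjoint_left]
    rintro x ⟨a, _, rfl⟩ ⟨b, hb, hx⟩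
    simp only [f, g, Sym2.eq_iff] at hx
    have hnd : ¬ (b : Sym2 V).IsDiag := G.not_isDiag_of_mem_edgeSet b.2
    rcases hx with ⟨h1, h2⟩ | ⟨h1, h2⟩
    · have hab : a = b := (Sum.inr_injective h2.symm)
      subst hab
      have hout : (a : Sym2 V).out.1 = (a : Sym2 V).out.2 := (Sum.inl_injective h1).symm
      apply hnd
      rw [houteq a, Sym2.mk_isDiag_iff]
      exact hout
    · exact (Sum.inl_ne_inr h1).elim
  have h1 : (f '' A).ncard = A.ncard := Set.ncard_image_of_injOn hfinj
  have h2 : (g '' B).ncard = B.ncard := Set.ncard_image_of_injOn hginj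
  have hsub : f '' A ∪ g '' B ⊆ T := by
    rintro x (⟨a, ha, rfl⟩ | ⟨b, hb, rfl⟩)
    exacts [hfT a ha, hgT b hb]
  have hle : (f '' A ∪ g '' B).ncard ≤ T.ncard :=
    Set.ncard_le_ncard hsub hTfin
  rw [Set.ncard_union_eq hdisj (Set.toFinite _) (Set.toFinite _), h1, h2] at hle
  have hA : A.ncard = G.edgeSet.ncard := by
    rw [Set.ncard_univ, Nat.card_coe_set_eq]
  have hB : B.ncard = happyEdgeCount G c := by
    unfold happyEdgeCount
    rw [← Set.ncard_image_of_injOn (f := fun e : G.edgeSet => (e : Sym2 V)) (Subtype.coe_injective.injOn)]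
    congr 1
    ext x
    constructor
    · rintro ⟨e, he, rfl⟩
      exact ⟨e.2, he⟩
    · rintro ⟨hx1, hx2⟩
      exact ⟨⟨x, hx1⟩, hx2, rfl⟩
  rw [hA, hB] at hle
  exact hle
end

section
/- Let G be a finite simple graph, let X ⊆ V(G) with |X| = d, and suppose that V(G) \ X is a clique (any two distinct vertices of V(G) \ X are adjacent). Let p : S → C be a partial coloring of G and let C_U = (V(G) \ X) \ S be the set of uncolored clique vertices. If |C_U| > d + 1, then every total coloring c extending p that maximizes the number of happy edges among all extensions of p assigns the same color to all vertices of C_U. -/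
open Classical

lemma ncard_prod_aux {α β : Type*} [Finite α] [Finite β] (s : Set α) (t : Set β) :
    (s ×ˢ t).ncard = s.ncard * t.ncard := by
  have := Fintype.ofFinite α; have := Fintype.ofFinite β
  classical
  rw [Set.ncard_eq_toFinset_card', Set.ncard_eq_toFinset_card', Set.ncard_eq_toFinset_card',
    Set.toFinset_prod, Finset.card_product]

lemma gained_lost {V Col : Type*} [Finite V] (G : SimpleGraph V) (c c' : V → Col) :
    happyEdgeCount G c' +
      {e ∈ G.edgeSet | (Sym2.map c e).IsDiag ∧ ¬ (Sym2.map c' e).IsDiag}.ncard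
    = happyEdgeCount G c +
      {e ∈ G.edgeSet | (Sym2.map c' e).IsDiag ∧ ¬ (Sym2.map c e).IsDiag}.ncard := by
  have h1 : {e ∈ G.edgeSet | (Sym2.map c' e).IsDiag}
      = {e ∈ G.edgeSet | (Sym2.map c e).IsDiag ∧ (Sym2.map c' e).IsDiag}
        ∪ {e ∈ G.edgeSet | (Sym2.map c' e).IsDiag ∧ ¬ (Sym2.map c e).IsDiag} := by
    ext e; simp only [Set.mem_setOf_eq, Set.mem_union]; tauto
  have h2 : {e ∈ G.edgeSet | (Sym2.map c e).IsDiag}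
      = {e ∈ G.edgeSet | (Sym2.map c e).IsDiag ∧ (Sym2.map c' e).IsDiag}
        ∪ {e ∈ G.edgeSet | (Sym2.map c e).IsDiag ∧ ¬ (Sym2.map c' e).IsDiag} := by
    ext e; simp only [Set.mem_setOf_eq, Set.mem_union]; tauto
  have d1 : Disjoint {e ∈ G.edgeSet | (Sym2.map c e).IsDiag ∧ (Sym2.map c' e).IsDiag}
      {e ∈ G.edgeSet | (Sym2.map c' e).IsDiag ∧ ¬ (Sym2.map c e).IsDiag} := by
    rw [Set.disjoint_left]; rintro e ⟨_, h, _⟩ ⟨_, _, h'⟩; exact h' h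
  have d2 : Disjoint {e ∈ G.edgeSet | (Sym2.map c e).IsDiag ∧ (Sym2.map c' e).IsDiag}
      {e ∈ G.edgeSet | (Sym2.map c e).IsDiag ∧ ¬ (Sym2.map c' e).IsDiag} := by
    rw [Set.disjoint_left]; rintro e ⟨_, _, h⟩ ⟨_, _, h'⟩; exact h' h
  rw [happyEdgeCount, happyEdgeCount, h1, h2,
    Set.ncard_union_eq d1 (Set.toFinite _) (Set.toFinite _),
    Set.ncard_union_eq d2 (Set.toFinite _) (Set.toFinite _)]
  ring

/-- The key class-move inequality. -/
lemma move_ineq {V Col : Type*} [Fintype V] (G : SimpleGraph V) (X : Set V)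
    (hclique : ∀ u ∉ X, ∀ v ∉ X, u ≠ v → G.Adj u v)
    (S : Set V) (c : V → Col)
    (hopt : ∀ c' : V → Col, (∀ v ∈ S, c' v = c v) →
      happyEdgeCount G c' ≤ happyEdgeCount G c)
    (a b : Col) (hab : a ≠ b)
    (w : V) (hwX : w ∉ X) (hwS : w ∉ S) (hwb : c w = b) :
    {v | v ∉ X ∧ c v = a}.ncard + {v | v ∉ X ∧ v ∉ S ∧ c v = b}.ncard
      ≤ {v | v ∉ X ∧ c v = b}.ncard + {x | x ∈ X ∧ c x = b}.ncard := by
  classical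
  set Acl : Set V := {v | v ∉ X ∧ c v = a} with hAcl
  set Bset : Set V := {v | v ∉ X ∧ v ∉ S ∧ c v = b} with hBset
  set BS : Set V := {v | v ∉ X ∧ v ∈ S ∧ c v = b} with hBS
  set Xb : Set V := {x | x ∈ X ∧ c x = b} with hXb
  -- the recoloring
  set c' : V → Col := fun v => if v ∉ X ∧ v ∉ S ∧ c v = b then a else c v with hc'
  have hc'eq : ∀ v, v ∈ Bset → c' v = a := by
    intro v hv; exact if_pos hv
  have hc'ne : ∀ v, v ∉ Bset → c' v = c v := by
    intro v hv; exact if_neg hv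
  have hext : ∀ v ∈ S, c' v = c v := by
    intro v hv; apply hc'ne; intro h; exact h.2.1 hv
  have hle := hopt c' hext
  have hGL := gained_lost G c c'
  have hGleL : {e ∈ G.edgeSet | (Sym2.map c' e).IsDiag ∧ ¬ (Sym2.map c e).IsDiag}.ncard
      ≤ {e ∈ G.edgeSet | (Sym2.map c e).IsDiag ∧ ¬ (Sym2.map c' e).IsDiag}.ncard := by
    omega
  -- gained edges contain the B×Acl complete bipartite family
  have hsub1 : Sym2.mk.uncurry '' (Bset ×ˢ Acl)
      ⊆ {e ∈ G.edgeSet | (Sym2.map c' e).IsDiag ∧ ¬ (Sym2.map c e).IsDiag} := by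
    rintro e ⟨⟨u, v⟩, ⟨hu, hv⟩, rfl⟩
    have huB : u ∈ Bset := hu
    have hvA : v ∈ Acl := hv
    have hne : u ≠ v := by
      rintro rfl; exact hab (hvA.2.symm.trans huB.2.2)
    have hvB : v ∉ Bset := by
      intro h; exact hab (hvA.2.symm.trans h.2.2)
    refine ⟨?_, ?_, ?_⟩
    · exact (SimpleGraph.mem_edgeSet G).2 (hclique u huB.1 v hvA.1 hne)
    · rw [Function.uncurry_apply_pair, Sym2.map_pair_eq, Sym2.mk_isDiag_iff, hc'eq u huB, hc'ne v hvB, hvA.2]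
    · rw [Function.uncurry_apply_pair, Sym2.map_pair_eq, Sym2.mk_isDiag_iff, huB.2.2, hvA.2]
      exact fun h => hab h.symm
  have hinj : Set.InjOn Sym2.mk.uncurry (Bset ×ˢ Acl) := by
    rintro ⟨u, v⟩ ⟨hu, hv⟩ ⟨u', v'⟩ ⟨hu', hv'⟩ h
    rw [Function.uncurry_apply_pair, Function.uncurry_apply_pair, Sym2.eq_iff] at h
    rcases h with ⟨h1, h2⟩ | ⟨h1, h2⟩
    · exact Prod.ext h1 h2
    · exfalso
      have hb : c v' = b := by rw [← h1]; exact hu.2.2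
      exact hab (hv'.2.symm.trans hb)
  -- lost edges are contained in B×(BS ∪ Xb)
  have hsub2 : {e ∈ G.edgeSet | (Sym2.map c e).IsDiag ∧ ¬ (Sym2.map c' e).IsDiag}
      ⊆ Sym2.mk.uncurry '' (Bset ×ˢ (BS ∪ Xb)) := by
    rintro e he
    induction e with
    | _ u v =>
      obtain ⟨hadj, hdiag, hndiag⟩ := he
      rw [Sym2.map_pair_eq, Sym2.mk_isDiag_iff] at hdiag hndiag
      have key : ∀ x y : V, c x = c y → c' x ≠ c' y → x ∈ Bset → y ∉ Bset →
          s(x, y) ∈ Sym2.mk.uncurry '' (Bset ×ˢ (BS ∪ Xb)) := by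
        intro x y hcd _ hx hy
        have hcy : c y = b := by rw [← hcd, hx.2.2]
        have hyD : y ∈ BS ∪ Xb := by
          by_cases hyX : y ∈ X
          · exact Or.inr ⟨hyX, hcy⟩
          · left
            refine ⟨hyX, ?_, hcy⟩
            by_contra hyS
            exact hy ⟨hyX, hyS, hcy⟩
        exact ⟨(x, y), ⟨hx, hyD⟩, rfl⟩
      by_cases huB : u ∈ Bset <;> by_cases hvB : v ∈ Bset
      · exfalso; exact hndiag (by rw [hc'eq u huB, hc'eq v hvB])
      · exact key u v hdiag hndiag huB hvB
      · rw [Sym2.eq_swap]; exact key v u hdiag.symm (fun h => hndiag h.symm) hvB huB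
      · exfalso; exact hndiag (by rw [hc'ne u huB, hc'ne v hvB, hdiag])
  -- cardinality comparison
  have h1 : Bset.ncard * Acl.ncard
      ≤ {e ∈ G.edgeSet | (Sym2.map c' e).IsDiag ∧ ¬ (Sym2.map c e).IsDiag}.ncard := by
    calc Bset.ncard * Acl.ncard = (Bset ×ˢ Acl).ncard := (ncard_prod_aux _ _).symm
    _ = (Sym2.mk.uncurry '' (Bset ×ˢ Acl)).ncard := (Set.ncard_image_of_injOn hinj).symm
    _ ≤ _ := Set.ncard_le_ncard hsub1 (Set.toFinite _)
  have h2 : {e ∈ G.edgeSet | (Sym2.map c e).IsDiag ∧ ¬ (Sym2.map c' e).IsDiag}.ncard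
      ≤ Bset.ncard * (BS.ncard + Xb.ncard) := by
    calc {e ∈ G.edgeSet | (Sym2.map c e).IsDiag ∧ ¬ (Sym2.map c' e).IsDiag}.ncard
        ≤ (Sym2.mk.uncurry '' (Bset ×ˢ (BS ∪ Xb))).ncard :=
          Set.ncard_le_ncard hsub2 (Set.toFinite _)
    _ ≤ (Bset ×ˢ (BS ∪ Xb)).ncard := Set.ncard_image_le (Set.toFinite _)
    _ = Bset.ncard * (BS ∪ Xb).ncard := ncard_prod_aux _ _
    _ ≤ Bset.ncard * (BS.ncard + Xb.ncard) :=
        Nat.mul_le_mul_left _ (Set.ncard_union_le _ _)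
  have hBpos : 1 ≤ Bset.ncard :=
    (Set.ncard_pos (Set.toFinite _)).2 ⟨w, ⟨hwX, hwS, hwb⟩⟩
  have hdiv : Acl.ncard ≤ BS.ncard + Xb.ncard := by
    have := le_trans h1 (le_trans hGleL h2)
    exact Nat.le_of_mul_le_mul_left
      (by calc Bset.ncard * Acl.ncard ≤ _ := this) (by omega)
  -- N_b = |Bset| + |BS|
  have hsplit : {v | v ∉ X ∧ c v = b}.ncard = Bset.ncard + BS.ncard := by
    have hun : {v | v ∉ X ∧ c v = b} = Bset ∪ BS := by
      ext v; simp only [hBset, hBS, Set.mem_setOf_eq, Set.mem_union]; tauto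
    have hdis : Disjoint Bset BS := by
      rw [Set.disjoint_left]; rintro v ⟨_, hv, _⟩ ⟨_, hv', _⟩; exact hv hv'
    rw [hun, Set.ncard_union_eq hdis (Set.toFinite _) (Set.toFinite _)]
  rw [hsplit]
  omega

/-- Let `X` be a set of `d` vertices of `G` whose complement is a clique, and let `p` be a
partial coloring of `G`.  If the set `C_U` of uncolored clique vertices has more than `d + 1`
elements, then every extension of `p` maximizing the number of happy edges colors all vertices
of `C_U` with a single color. -/
theorem optimal_coloring_constant_on_uncolored_clique
    {V Col : Type*} [Fintype V] (G : SimpleGraph V) (X : Set V) (d : ℕ) (hd : X.ncard = d)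
    (hclique : ∀ u ∉ X, ∀ v ∉ X, u ≠ v → G.Adj u v)
    (S : Set V) (p : S → Col)
    (hCU : d + 1 < {v | v ∉ X ∧ v ∉ S}.ncard)
    (c : V → Col) (hc : ∀ v (hv : v ∈ S), c v = p ⟨v, hv⟩)
    (hopt : ∀ c' : V → Col, (∀ v (hv : v ∈ S), c' v = p ⟨v, hv⟩) →
      happyEdgeCount G c' ≤ happyEdgeCount G c) :
    ∀ u ∈ {v | v ∉ X ∧ v ∉ S}, ∀ w ∈ {v | v ∉ X ∧ v ∉ S}, c u = c w := by
  classical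
  intro u hu w hw
  by_contra hne
  -- optimality w.r.t. colorings agreeing with c on S
  have hopt' : ∀ c' : V → Col, (∀ v ∈ S, c' v = c v) →
      happyEdgeCount G c' ≤ happyEdgeCount G c := by
    intro c' h
    exact hopt c' (fun v hv => (h v hv).trans (hc v hv))
  -- Finset bookkeeping
  set CUf : Finset V := Finset.univ.filter (fun v => v ∉ X ∧ v ∉ S) with hCUf
  set Xf : Finset V := Finset.univ.filter (fun v => v ∈ X) with hXf
  set m : Col → ℕ := fun γ => (CUf.filter (fun v => c v = γ)).card with hm
  set dX : Col → ℕ := fun γ => (Xf.filter (fun v => c v = γ)).card with hdX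
  have hmcoe : ∀ γ : Col, {v : V | v ∉ X ∧ v ∉ S ∧ c v = γ}.ncard = m γ := by
    intro γ
    have : {v : V | v ∉ X ∧ v ∉ S ∧ c v = γ} = ↑(CUf.filter (fun v => c v = γ)) := by
      ext v
      simp only [hCUf, Set.mem_setOf_eq, Finset.coe_filter, Finset.mem_filter,
        Finset.mem_univ, true_and]
      tauto
    rw [this, Set.ncard_coe_finset]
  have hdcoe : ∀ γ : Col, {x : V | x ∈ X ∧ c x = γ}.ncard = dX γ := by
    intro γ
    have : {x : V | x ∈ X ∧ c x = γ} = ↑(Xf.filter (fun v => c v = γ)) := by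
      ext v
      simp only [hXf, Set.mem_setOf_eq, Finset.coe_filter, Finset.mem_filter,
        Finset.mem_univ, true_and]
    rw [this, Set.ncard_coe_finset]
  -- pairwise inequality from `move_ineq`
  have key : ∀ γ δ : Col, γ ≠ δ →
      (∃ v, v ∉ X ∧ v ∉ S ∧ c v = γ) → (∃ v, v ∉ X ∧ v ∉ S ∧ c v = δ) →
      m γ + m δ ≤ dX γ + dX δ := by
    intro γ δ hγδ ⟨vg, hvg⟩ ⟨vd, hvd⟩
    have h1 := move_ineq G X hclique S c hopt' γ δ hγδ vd hvd.1 hvd.2.1 hvd.2.2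
    have h2 := move_ineq G X hclique S c hopt' δ γ hγδ.symm vg hvg.1 hvg.2.1 hvg.2.2
    rw [hmcoe, hdcoe] at h1 h2
    omega
  -- the present colors
  set P : Finset Col := CUf.image c with hP
  have hmemCUf : ∀ v : V, v ∈ CUf ↔ (v ∉ X ∧ v ∉ S) := by
    intro v; simp [hCUf]
  -- sums
  have hsum_m : ∑ γ ∈ P, m γ = CUf.card := by
    exact (Finset.card_eq_sum_card_fiberwise
      (fun x hx => Finset.mem_image_of_mem c hx)).symm
  have hsum_d : ∑ γ ∈ P, dX γ ≤ Xf.card := by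
    set Xf' : Finset V := Xf.filter (fun v => c v ∈ P) with hXf'
    have h1 : ∀ γ ∈ P, dX γ = (Xf'.filter (fun v => c v = γ)).card := by
      intro γ hγ
      have heq : Xf.filter (fun v => c v = γ) = Xf'.filter (fun v => c v = γ) := by
        ext v
        simp only [hXf', Finset.mem_filter, and_assoc]
        constructor
        · rintro ⟨hv, hcv⟩; exact ⟨hv, by rw [hcv]; exact hγ, hcv⟩
        · rintro ⟨hv, _, hcv⟩; exact ⟨hv, hcv⟩
      simp only [hdX]
      rw [heq]
    calc ∑ γ ∈ P, dX γ = ∑ γ ∈ P, (Xf'.filter (fun v => c v = γ)).card :=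
          Finset.sum_congr rfl h1
      _ = Xf'.card := (Finset.card_eq_sum_card_fiberwise
          (fun x hx => (Finset.mem_filter.1 hx).2)).symm
      _ ≤ Xf.card := Finset.card_filter_le _ _
  have hCUcard : d + 2 ≤ CUf.card := by
    have : {v : V | v ∉ X ∧ v ∉ S}.ncard = CUf.card := by
      have : {v : V | v ∉ X ∧ v ∉ S} = ↑CUf := by
        ext v
        simp [hCUf]
      rw [this, Set.ncard_coe_finset]
    omega
  have hXcard : Xf.card = d := by
    have : X = ↑Xf := by ext v; simp [hXf]
    rw [← hd, this, Set.ncard_coe_finset]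
  -- membership of the two colors
  have huCU : u ∈ CUf := (hmemCUf u).2 hu
  have hwCU : w ∈ CUf := (hmemCUf w).2 hw
  have haP : c u ∈ P := Finset.mem_image_of_mem c huCU
  have hbP : c w ∈ P := Finset.mem_image_of_mem c hwCU
  -- every color in P is witnessed
  have hwit : ∀ γ ∈ P, ∃ v, v ∉ X ∧ v ∉ S ∧ c v = γ := by
    intro γ hγ
    obtain ⟨v, hv, hcv⟩ := Finset.mem_image.1 hγ
    exact ⟨v, ((hmemCUf v).1 hv).1, ((hmemCUf v).1 hv).2, hcv⟩
  -- integer-valued deficiency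
  set f : Col → ℤ := fun γ => (m γ : ℤ) - (dX γ : ℤ) with hf
  have hpair : ∀ γ ∈ P, ∀ δ ∈ P, γ ≠ δ → f γ + f δ ≤ 0 := by
    intro γ hγ δ hδ hne'
    have := key γ δ hne' (hwit γ hγ) (hwit δ hδ)
    simp only [hf]
    omega
  have hSig : 2 ≤ ∑ γ ∈ P, f γ := by
    have e1 : ∑ γ ∈ P, f γ = ((∑ γ ∈ P, m γ : ℕ) : ℤ) - ((∑ γ ∈ P, dX γ : ℕ) : ℤ) := by
      push_cast
      rw [← Finset.sum_sub_distrib]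
    have h1 : (∑ γ ∈ P, dX γ) ≤ d := hXcard ▸ hsum_d
    rw [e1, hsum_m]
    omega
  -- contradiction via the maximal element
  obtain ⟨γ₀, hγ₀P, hmax⟩ := Finset.exists_max_image P f ⟨c u, haP⟩
  have hPer : 1 ≤ (P.erase γ₀).card := by
    have h2P : 2 ≤ P.card := by
      refine Finset.one_lt_card.2 ⟨c u, haP, c w, hbP, hne⟩
    have := Finset.card_erase_of_mem hγ₀P
    omega
  have hsum_split : ∑ γ ∈ P, f γ = f γ₀ + ∑ γ ∈ P.erase γ₀, f γ :=
    (Finset.add_sum_erase P f hγ₀P).symm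
  rcases le_or_gt (f γ₀) 0 with h0 | h0
  · have : ∑ γ ∈ P, f γ ≤ 0 :=
      Finset.sum_nonpos (fun γ hγ => (hmax γ hγ).trans h0)
    omega
  · have hbound : ∀ γ ∈ P.erase γ₀, f γ ≤ -f γ₀ := by
      intro γ hγ
      have hne' : γ ≠ γ₀ := Finset.ne_of_mem_erase hγ
      have := hpair γ (Finset.mem_of_mem_erase hγ) γ₀ hγ₀P hne'
      omega
    have h1 : ∑ γ ∈ P.erase γ₀, f γ ≤ (P.erase γ₀).card • (-f γ₀) :=
      Finset.sum_le_card_nsmul _ _ _ hbound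
    have h2 : ((P.erase γ₀).card : ℤ) * (-f γ₀) ≤ 1 * (-f γ₀) := by
      apply mul_le_mul_of_nonpos_right _ (by omega)
      exact_mod_cast hPer
    rw [nsmul_eq_mul] at h1
    omega
end

section
/- Let G be a finite simple graph, let X ⊆ V(G) with |X| = d, and suppose that C = V(G) \ X is a clique. Let p : S → C be a partial coloring of G that uses more than d + 1 distinct colors on S. Then the precoloring p uses at least two distinct colors on S ∩ C, and consequently, for every total coloring c extending p, no vertex of C is happy with respect to c. -/
/-- Let `X` be a set of `d` vertices of `G` whose complement `C` is a clique.  If a partial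
coloring `p` uses more than `d + 1` distinct colors, then it uses at least two distinct colors
on `S ∩ C`, and consequently no extension of `p` makes any vertex of `C` happy. -/
theorem many_colors_clique_no_happy_vertex
    {V Col : Type*} [Fintype V] (G : SimpleGraph V) (X : Set V) (d : ℕ) (hd : X.ncard = d)
    (hclique : ∀ u ∉ X, ∀ v ∉ X, u ≠ v → G.Adj u v)
    (S : Set V) (p : S → Col)
    (hcolors : d + 1 < (Set.range p).ncard) :
    (∃ (a b : V) (ha : a ∈ S) (hb : b ∈ S), a ∉ X ∧ b ∉ X ∧ p ⟨a, ha⟩ ≠ p ⟨b, hb⟩) ∧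
    (∀ c : V → Col, (∀ v (hv : v ∈ S), c v = p ⟨v, hv⟩) →
      ∀ v ∉ X, ¬ IsHappyVertex G c v) := by
  classical
  haveI : Fintype S := Set.Finite.fintype (Set.toFinite S)
  set T : Set S := {x : S | (x : V) ∈ X} with hT
  set T' : Set S := {x : S | (x : V) ∉ X} with hT'
  have hrange : Set.range p = p '' T ∪ p '' T' := by
    ext y
    constructor
    · rintro ⟨x, rfl⟩
      by_cases hx : (x : V) ∈ X
      · exact Or.inl ⟨x, hx, rfl⟩
      · exact Or.inr ⟨x, hx, rfl⟩
    · rintro (⟨x, _, rfl⟩ | ⟨x, _, rfl⟩) <;> exact ⟨x, rfl⟩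
  have hTcard : (p '' T).ncard ≤ d := by
    have h1 : (p '' T).ncard ≤ T.ncard := Set.ncard_image_le (Set.toFinite T)
    have h2 : T.ncard = (Subtype.val '' T).ncard :=
      (Set.ncard_image_of_injective T Subtype.val_injective).symm
    have h3 : (Subtype.val '' T).ncard ≤ X.ncard := by
      apply Set.ncard_le_ncard _ (Set.toFinite X)
      rintro v ⟨x, hx, rfl⟩
      exact hx
    omega
  have hB : 1 < (p '' T').ncard := by
    have := Set.ncard_union_le (p '' T) (p '' T')
    rw [← hrange] at this
    omega
  obtain ⟨ya, yb, hya, hyb, hne⟩ := (Set.one_lt_ncard_iff (Set.toFinite _)).mp hB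
  obtain ⟨a, haT, rfl⟩ := hya
  obtain ⟨b, hbT, rfl⟩ := hyb
  have key : ∃ (a b : V) (ha : a ∈ S) (hb : b ∈ S),
      a ∉ X ∧ b ∉ X ∧ p ⟨a, ha⟩ ≠ p ⟨b, hb⟩ :=
    ⟨a, b, a.2, b.2, haT, hbT, hne⟩
  refine ⟨key, ?_⟩
  intro c hc v hv hhappy
  obtain ⟨a, b, ha, hb, haX, hbX, hpab⟩ := key
  have hca : c a = c v := by
    by_cases hav : a = v
    · rw [hav]
    · exact hhappy a (hclique v hv a haX (fun h => hav h.symm))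
  have hcb : c b = c v := by
    by_cases hbv : b = v
    · rw [hbv]
    · exact hhappy b (hclique v hv b hbX (fun h => hbv h.symm))
  apply hpab
  rw [← hc a ha, ← hc b hb, hca, hcb]
end

section
/- Let G be a finite simple graph, p : S → C a partial coloring, X ⊆ V(G), χ an equivalence relation (partition) on X, and Y ⊆ X. For a vertex v, let λ(v) = { p(u) : u ∈ N[v] ∩ S } be the set of colors used by p on the closed neighborhood of v. Suppose there exists a total coloring c such that: c extends p; every vertex of Y is happy with respect to c; and for all u, v ∈ X, c(u) = c(v) if and only if u and v are χ-equivalent. Then: (1) for every v ∈ Y, λ(v) has at most one element; (2) for all χ-equivalent u, v ∈ Y with λ(u) and λ(v) both nonempty, λ(u) = λ(v); (3) for all u, v ∈ Y that are not χ-equivalent, N(u) ∩ N(v) = ∅; and (4) for every v ∈ Y, every u ∈ N(v) ∩ X is χ-equivalent to v. -/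
/-- Necessary conditions for a valid coloring respecting `(χ, Y)`: if `c` extends `p`, makes
every vertex of `Y ⊆ X` happy, and colors `u, v ∈ X` equally iff they are `χ`-equivalent, then
the four conditions `(⋆)` hold, where `lam v` is the set of colors used by `p` on `N[v]`. -/
theorem valid_coloring_necessary_conditions
    {V Col : Type*} [Fintype V] (G : SimpleGraph V) (S : Set V) (p : S → Col)
    (X : Set V) (χ : V → V → Prop) (Y : Set V) (hYX : Y ⊆ X)
    (lam : V → Set Col)
    (hlam : ∀ v, lam v = {col : Col | ∃ u, (u = v ∨ G.Adj v u) ∧ ∃ hu : u ∈ S, p ⟨u, hu⟩ = col})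
    (c : V → Col)
    (hext : ∀ v (hv : v ∈ S), c v = p ⟨v, hv⟩)
    (hhappy : ∀ v ∈ Y, IsHappyVertex G c v)
    (hχ : ∀ u ∈ X, ∀ v ∈ X, (c u = c v ↔ χ u v)) :
    (∀ v ∈ Y, (lam v).Subsingleton) ∧
    (∀ u ∈ Y, ∀ v ∈ Y, χ u v → (lam u).Nonempty → (lam v).Nonempty → lam u = lam v) ∧
    (∀ u ∈ Y, ∀ v ∈ Y, ¬ χ u v → G.neighborSet u ∩ G.neighborSet v = ∅) ∧
    (∀ v ∈ Y, ∀ u, G.Adj v u → u ∈ X → χ u v) := by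
  have key : ∀ v ∈ Y, ∀ col ∈ lam v, col = c v := by
    intro v hv col hcol
    rw [hlam] at hcol
    obtain ⟨u, hu, huS, hp⟩ := hcol
    have hcu : c u = c v := by
      rcases hu with rfl | hadj
      · rfl
      · exact hhappy v hv u hadj
    rw [← hp, ← hext u huS, hcu]
  refine ⟨?_, ?_, ?_, ?_⟩
  · intro v hv a ha b hb
    rw [key v hv a ha, key v hv b hb]
  · intro u hu v hv hchi ⟨a, ha⟩ ⟨b, hb⟩
    have hcuv : c u = c v := (hχ u (hYX hu) v (hYX hv)).2 hchi
    have : a = b := by rw [key u hu a ha, key v hv b hb, hcuv]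
    subst this
    ext x
    constructor
    · intro hx; rwa [key u hu x hx, hcuv, ← key v hv a hb]
    · intro hx; rwa [key v hv x hx, ← hcuv, ← key u hu a ha]
  · intro u hu v hv hchi
    ext w
    simp only [Set.mem_inter_iff, SimpleGraph.mem_neighborSet, Set.mem_empty_iff_false,
      iff_false, not_and]
    intro hwu hwv
    exact hchi ((hχ u (hYX hu) v (hYX hv)).1
      ((hhappy u hu w hwu).symm.trans (hhappy v hv w hwv)))
  · intro v hv u hadj hx
    exact (hχ u hx v (hYX hv)).1 (hhappy v hv u hadj)
end
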